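/- Fix n ≥ 1 and Selling parameters p_{ij} > 0 for 0 ≤ i < j ≤ n, and consider the lattice ℤⁿ in ℝⁿ with the inner product ⟨x, y⟩_p = Σ_{0 ≤ i < j ≤ n} p_{ij}(x_i − x_j)(y_i − y_j) (with the convention x₀ = y₀ = 0), with v_i = e_i for 1 ≤ i ≤ n, v₀ = −(e₁ + ⋯ + eₙ), and v_S = Σ_{i∈S} v_i for S ⊆ {0, …, n}. Call a 'chain' any set A of n nonempty proper subsets of {0, …, n} that is totally ordered by inclusion (so A = {S₁ ⊊ S₂ ⊊ ⋯ ⊊ Sₙ}). Then: (a) for every chain A there is a unique point s_A ∈ ℝⁿ satisfying 2⟨v_S, s_A⟩_p = ⟨v_S, v_S⟩_p for all S ∈ A; (b) s_A belongs to the Voronoi cell 𝒱 = {x ∈ ℝⁿ : ⟨x, x⟩_p ≤ ⟨x − ℓ, x − ℓ⟩_p for all ℓ ∈ ℤⁿ}; and (c) the map A ↦ s_A is a bijection from the set of chains onto the set of extreme points (vertices) of 𝒱. -/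

import Mathlib

/-- Extend `x : ℝⁿ` to coordinates indexed by `{0, …, n}` with the convention `x₀ = 0`. -/
def sellingCoord {n : ℕ} (x : Fin n → ℝ) : Fin (n + 1) → ℝ := Fin.cons 0 x

/-- The Selling bilinear form `⟨x, y⟩_p = Σ_{0 ≤ i < j ≤ n} p_{ij}(x_i − x_j)(y_i − y_j)`
on `ℝⁿ`, with the convention `x₀ = y₀ = 0`. -/
noncomputable def sellingForm (n : ℕ) (p : Fin (n + 1) → Fin (n + 1) → ℝ)
    (x y : Fin n → ℝ) : ℝ :=
  ∑ i : Fin (n + 1), ∑ j : Fin (n + 1),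
    if (i : ℕ) < (j : ℕ) then
      p i j * (sellingCoord x i - sellingCoord x j) *
        (sellingCoord y i - sellingCoord y j)
    else 0

/-- The vector `v_S = Σ_{i ∈ S} v_i`, where `v_i = e_i` for `1 ≤ i ≤ n` and
`v₀ = −(e₁ + ⋯ + eₙ)`. -/
def sellingV (n : ℕ) (S : Finset (Fin (n + 1))) : Fin n → ℝ := fun j =>
  (if j.succ ∈ S then (1 : ℝ) else 0) - (if (0 : Fin (n + 1)) ∈ S then (1 : ℝ) else 0)

/-- The Voronoi cell of the lattice `ℤⁿ` with respect to the Selling form `⟨·,·⟩_p`. -/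
noncomputable def sellingVoronoiCell (n : ℕ) (p : Fin (n + 1) → Fin (n + 1) → ℝ) :
    Set (Fin n → ℝ) :=
  {x | ∀ ℓ : Fin n → ℤ,
    sellingForm n p x x ≤
      sellingForm n p (fun i => x i - (ℓ i : ℝ)) (fun i => x i - (ℓ i : ℝ))}

/-- A "chain": a set of `n` nonempty proper subsets of `{0, …, n}` totally ordered by
inclusion. -/
def IsSellingChain (n : ℕ) (A : Finset (Finset (Fin (n + 1)))) : Prop :=
  A.card = n ∧ (∀ S ∈ A, S.Nonempty ∧ S ≠ Finset.univ) ∧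
    ∀ S ∈ A, ∀ T ∈ A, S ⊆ T ∨ T ⊆ S

namespace S19

variable {n : ℕ} (p : Fin (n + 1) → Fin (n + 1) → ℝ)

def ind (S : Finset (Fin (n + 1))) : Fin (n + 1) → ℝ := fun i => if i ∈ S then 1 else 0

noncomputable def Bt (a b : Fin (n + 1) → ℝ) : ℝ :=
  ∑ i : Fin (n + 1), ∑ j : Fin (n + 1),
    if (i : ℕ) < (j : ℕ) then p i j * (a i - a j) * (b i - b j) else 0

lemma sellingForm_eq_Bt (x y : Fin n → ℝ) :
    sellingForm n p x y = Bt p (sellingCoord x) (sellingCoord y) := rfl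

lemma Bt_comm (a b : Fin (n + 1) → ℝ) : Bt p a b = Bt p b a := by
  refine Finset.sum_congr rfl fun i _ => Finset.sum_congr rfl fun j _ => ?_
  split_ifs <;> ring

lemma Bt_add_left (a a' b : Fin (n + 1) → ℝ) :
    Bt p (a + a') b = Bt p a b + Bt p a' b := by
  unfold Bt
  rw [← Finset.sum_add_distrib]
  refine Finset.sum_congr rfl fun i _ => ?_
  rw [← Finset.sum_add_distrib]
  refine Finset.sum_congr rfl fun j _ => ?_
  simp only [Pi.add_apply]
  split_ifs <;> ring

lemma Bt_smul_left (c : ℝ) (a b : Fin (n + 1) → ℝ) :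
    Bt p (c • a) b = c * Bt p a b := by
  unfold Bt
  rw [Finset.mul_sum]
  refine Finset.sum_congr rfl fun i _ => ?_
  rw [Finset.mul_sum]
  refine Finset.sum_congr rfl fun j _ => ?_
  simp only [Pi.smul_apply, smul_eq_mul]
  split_ifs <;> ring

lemma Bt_zero_left (b : Fin (n + 1) → ℝ) : Bt p 0 b = 0 := by
  have := Bt_smul_left p 0 0 b
  simpa using this

lemma Bt_sub_left (a a' b : Fin (n + 1) → ℝ) :
    Bt p (a - a') b = Bt p a b - Bt p a' b := by
  have h := Bt_add_left p (a - a') a' b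
  simp only [sub_add_cancel] at h
  linarith

lemma Bt_add_right (a b b' : Fin (n + 1) → ℝ) :
    Bt p a (b + b') = Bt p a b + Bt p a b' := by
  rw [Bt_comm, Bt_add_left, Bt_comm p b a, Bt_comm p b' a]

lemma Bt_smul_right (c : ℝ) (a b : Fin (n + 1) → ℝ) :
    Bt p a (c • b) = c * Bt p a b := by
  rw [Bt_comm, Bt_smul_left, Bt_comm p b a]

lemma Bt_sub_right (a b b' : Fin (n + 1) → ℝ) :
    Bt p a (b - b') = Bt p a b - Bt p a b' := by
  rw [Bt_comm, Bt_sub_left, Bt_comm p b a, Bt_comm p b' a]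

lemma Bt_shift_left (a b : Fin (n + 1) → ℝ) (c : ℝ) :
    Bt p (fun i => a i - c) b = Bt p a b := by
  refine Finset.sum_congr rfl fun i _ => Finset.sum_congr rfl fun j _ => ?_
  split_ifs <;> ring_nf

lemma Bt_const_left (c : ℝ) (b : Fin (n + 1) → ℝ) : Bt p (fun _ => c) b = 0 := by
  have h := Bt_shift_left p (fun _ => c) b c
  simp only [sub_self] at h
  rw [← h]
  have h2 : (fun _ : Fin (n+1) => (0:ℝ)) = (0 : Fin (n+1) → ℝ) := rfl
  rw [h2, Bt_zero_left]

/-- left-linear map version -/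
noncomputable def BtL (b : Fin (n + 1) → ℝ) : (Fin (n + 1) → ℝ) →ₗ[ℝ] ℝ where
  toFun a := Bt p a b
  map_add' a a' := Bt_add_left p a a' b
  map_smul' c a := by simpa using Bt_smul_left p c a b

lemma Bt_sum_left {ι : Type*} (s : Finset ι) (f : ι → Fin (n + 1) → ℝ)
    (b : Fin (n + 1) → ℝ) : Bt p (∑ i ∈ s, f i) b = ∑ i ∈ s, Bt p (f i) b := by
  have := map_sum (BtL p b) f s
  simpa only [BtL, LinearMap.coe_mk, AddHom.coe_mk] using this

lemma Bt_self_nonneg (hp : ∀ i j : Fin (n + 1), (i : ℕ) < (j : ℕ) → 0 < p i j) (a : Fin (n + 1) → ℝ) : 0 ≤ Bt p a a := by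
  refine Finset.sum_nonneg fun i _ => Finset.sum_nonneg fun j _ => ?_
  split_ifs with h
  · rw [mul_assoc]
    exact mul_nonneg (hp i j h).le (mul_self_nonneg _)
  · exact le_refl 0

lemma Bt_coord_eq_zero (hp : ∀ i j : Fin (n + 1), (i : ℕ) < (j : ℕ) → 0 < p i j) {x : Fin n → ℝ}
    (h : Bt p (sellingCoord x) (sellingCoord x) = 0) : x = 0 := by
  have hnn : ∀ i ∈ (Finset.univ : Finset (Fin (n+1))), ∀ j ∈ (Finset.univ : Finset (Fin (n+1))),
      0 ≤ if (i : ℕ) < (j : ℕ) then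
        p i j * (sellingCoord x i - sellingCoord x j) * (sellingCoord x i - sellingCoord x j) else 0 := by
    intro i _ j _
    split_ifs with hij
    · rw [mul_assoc]; exact mul_nonneg (hp i j hij).le (mul_self_nonneg _)
    · exact le_refl 0
  funext k
  have h1 : ∀ i ∈ (Finset.univ : Finset (Fin (n+1))),
      (0:ℝ) ≤ ∑ j : Fin (n+1), if (i : ℕ) < (j : ℕ) then
        p i j * (sellingCoord x i - sellingCoord x j) * (sellingCoord x i - sellingCoord x j) else 0 :=
    fun i hi => Finset.sum_nonneg fun j hj => hnn i hi j hj
  have h0 : ∑ j : Fin (n+1), (if ((0:Fin (n+1)) : ℕ) < (j : ℕ) then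
      p 0 j * (sellingCoord x 0 - sellingCoord x j) * (sellingCoord x 0 - sellingCoord x j) else 0) = 0 := by
    have := (Finset.sum_eq_zero_iff_of_nonneg h1).mp h 0 (Finset.mem_univ _)
    exact this
  have hterm := (Finset.sum_eq_zero_iff_of_nonneg (fun j hj => hnn 0 (Finset.mem_univ _) j hj)).mp h0 k.succ (Finset.mem_univ _)
  have hlt : ((0:Fin (n+1)) : ℕ) < (k.succ : ℕ) := by simp [Fin.val_succ]
  rw [if_pos hlt] at hterm
  have hx0 : sellingCoord x 0 = 0 := rfl
  have hxs : sellingCoord x k.succ = x k := by simp [sellingCoord]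
  rw [hx0, hxs] at hterm
  have hpk := hp 0 k.succ hlt
  have : (0 - x k) * (0 - x k) = 0 := by
    by_contra hne
    have := mul_ne_zero (ne_of_gt hpk) hne
    rw [mul_assoc] at hterm
    exact this hterm
  show x k = (0 : Fin n → ℝ) k
  have hxk : x k = 0 := by nlinarith [sq_nonneg (x k)]
  simpa using hxk


lemma coord_zero : sellingCoord (0 : Fin n → ℝ) = 0 := by
  funext i
  refine Fin.cases ?_ ?_ i <;> simp [sellingCoord]

lemma coord_add (x y : Fin n → ℝ) :
    sellingCoord (x + y) = sellingCoord x + sellingCoord y := by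
  funext i
  refine Fin.cases ?_ ?_ i <;> simp [sellingCoord]

lemma coord_smul (c : ℝ) (x : Fin n → ℝ) :
    sellingCoord (c • x) = c • sellingCoord x := by
  funext i
  refine Fin.cases ?_ ?_ i <;> simp [sellingCoord]

lemma coord_sub (x y : Fin n → ℝ) :
    sellingCoord (fun i => x i - y i) = sellingCoord x - sellingCoord y := by
  funext i
  refine Fin.cases ?_ ?_ i <;> simp [sellingCoord]

lemma ind_empty : ind (∅ : Finset (Fin (n + 1))) = 0 := by
  funext i; simp [ind]

lemma ind_univ : ind (Finset.univ : Finset (Fin (n + 1))) = fun _ => 1 := by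
  funext i; simp [ind]

lemma coord_sellingV (S : Finset (Fin (n + 1))) :
    sellingCoord (sellingV n S) = fun i => ind S i - ind S 0 := by
  funext i
  refine Fin.cases ?_ ?_ i
  · simp [sellingCoord, ind]
  · intro j
    simp [sellingCoord, sellingV, ind]

lemma Bt_sellingV_left (S : Finset (Fin (n + 1))) (b : Fin (n + 1) → ℝ) :
    Bt p (sellingCoord (sellingV n S)) b = Bt p (ind S) b := by
  rw [coord_sellingV, Bt_shift_left]

lemma sf_v (S : Finset (Fin (n + 1))) (y : Fin n → ℝ) :
    sellingForm n p (sellingV n S) y = Bt p (ind S) (sellingCoord y) := by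
  rw [sellingForm_eq_Bt, Bt_sellingV_left]

noncomputable def Q (S : Finset (Fin (n + 1))) : ℝ := Bt p (ind S) (ind S)

lemma sf_vv (S : Finset (Fin (n + 1))) :
    sellingForm n p (sellingV n S) (sellingV n S) = Q p S := by
  rw [sf_v, Bt_comm, Bt_sellingV_left, Bt_comm]; rfl

lemma ind_decomp (S T : Finset (Fin (n + 1))) :
    ind S = ind (S ∩ T) + ind (S \ T) := by
  funext i
  by_cases hS : i ∈ S <;> by_cases hT : i ∈ T <;>
    simp [ind, Finset.mem_inter, Finset.mem_sdiff, hS, hT]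

lemma ind_union_decomp (S T : Finset (Fin (n + 1))) :
    ind (S ∪ T) = ind (S ∩ T) + ind (S \ T) + ind (T \ S) := by
  funext i
  by_cases hS : i ∈ S <;> by_cases hT : i ∈ T <;>
    simp [ind, Finset.mem_inter, Finset.mem_sdiff, Finset.mem_union, hS, hT]

lemma ind_sdiff_of_subset {S T : Finset (Fin (n + 1))} (h : S ⊆ T) :
    ind (T \ S) = ind T - ind S := by
  funext i
  by_cases hS : i ∈ S <;> by_cases hT : i ∈ T <;>
    simp [ind, Finset.mem_sdiff, hS, hT]
  · exact absurd (h hS) hT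


lemma term_nonpos (hp : ∀ i j : Fin (n + 1), (i : ℕ) < (j : ℕ) → 0 < p i j)
    {U W : Finset (Fin (n + 1))} (h : Disjoint U W) (i j : Fin (n + 1)) :
    (if (i : ℕ) < (j : ℕ) then p i j * (ind U i - ind U j) * (ind W i - ind W j) else 0) ≤ 0 := by
  split_ifs with hij
  · have hpij := hp i j hij
    by_cases hiU : i ∈ U <;> by_cases hjU : j ∈ U <;>
      by_cases hiW : i ∈ W <;> by_cases hjW : j ∈ W <;>
      first
        | exact absurd (Finset.disjoint_left.mp h hiU) (fun hh => hh hiW)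
        | exact absurd (Finset.disjoint_left.mp h hjU) (fun hh => hh hjW)
        | (simp only [ind, hiU, hjU, hiW, hjW, if_true, if_false]; nlinarith)
  · exact le_refl 0

lemma Bt_disjoint_nonpos (hp : ∀ i j : Fin (n + 1), (i : ℕ) < (j : ℕ) → 0 < p i j)
    {U W : Finset (Fin (n + 1))} (h : Disjoint U W) :
    Bt p (ind U) (ind W) ≤ 0 :=
  Finset.sum_nonpos fun i _ => Finset.sum_nonpos fun j _ => term_nonpos p hp h i j

lemma Bt_disjoint_neg_aux (hp : ∀ i j : Fin (n + 1), (i : ℕ) < (j : ℕ) → 0 < p i j)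
    {U W : Finset (Fin (n + 1))} (h : Disjoint U W) {i₀ j₀ : Fin (n + 1)}
    (hi₀ : i₀ ∈ U) (hj₀ : j₀ ∈ W) (hlt : (i₀ : ℕ) < (j₀ : ℕ)) :
    Bt p (ind U) (ind W) < 0 := by
  have hterm : (if (i₀ : ℕ) < (j₀ : ℕ) then
      p i₀ j₀ * (ind U i₀ - ind U j₀) * (ind W i₀ - ind W j₀) else 0) < 0 := by
    rw [if_pos hlt]
    have h1 : ind U i₀ = 1 := by simp [ind, hi₀]
    have h2 : ind U j₀ = 0 := by simp [ind, Finset.disjoint_right.mp h hj₀]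
    have h3 : ind W i₀ = 0 := by simp [ind, Finset.disjoint_left.mp h hi₀]
    have h4 : ind W j₀ = 1 := by simp [ind, hj₀]
    rw [h1, h2, h3, h4]
    have := hp i₀ j₀ hlt
    nlinarith
  have hrow : (∑ j : Fin (n + 1),
      if (i₀ : ℕ) < (j : ℕ) then p i₀ j * (ind U i₀ - ind U j) * (ind W i₀ - ind W j) else 0) < 0 := by
    have : (∑ j : Fin (n + 1),
        if (i₀ : ℕ) < (j : ℕ) then p i₀ j * (ind U i₀ - ind U j) * (ind W i₀ - ind W j) else 0)
        < ∑ _j : Fin (n + 1), (0 : ℝ) := by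
      refine Finset.sum_lt_sum (fun j _ => term_nonpos p hp h i₀ j) ⟨j₀, Finset.mem_univ _, hterm⟩
    simpa using this
  have : Bt p (ind U) (ind W) < ∑ _i : Fin (n + 1), (0 : ℝ) := by
    refine Finset.sum_lt_sum (fun i _ => Finset.sum_nonpos fun j _ => term_nonpos p hp h i j)
      ⟨i₀, Finset.mem_univ _, ?_⟩
    simpa using hrow
  simpa using this

lemma Bt_disjoint_neg (hp : ∀ i j : Fin (n + 1), (i : ℕ) < (j : ℕ) → 0 < p i j)
    {U W : Finset (Fin (n + 1))} (h : Disjoint U W) (hU : U.Nonempty) (hW : W.Nonempty) :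
    Bt p (ind U) (ind W) < 0 := by
  obtain ⟨i₀, hi₀⟩ := hU
  obtain ⟨j₀, hj₀⟩ := hW
  have hne : (i₀ : ℕ) ≠ (j₀ : ℕ) := by
    intro hh
    exact Finset.disjoint_left.mp h hi₀ ((Fin.ext hh : i₀ = j₀) ▸ hj₀)
  rcases lt_or_gt_of_ne hne with hlt | hgt
  · exact Bt_disjoint_neg_aux p hp h hi₀ hj₀ hlt
  · rw [Bt_comm]
    exact Bt_disjoint_neg_aux p hp h.symm hj₀ hi₀ hgt

lemma lin_modular (S T : Finset (Fin (n + 1))) (z : Fin (n + 1) → ℝ) :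
    Bt p (ind (S ∪ T)) z + Bt p (ind (S ∩ T)) z = Bt p (ind S) z + Bt p (ind T) z := by
  have hS := ind_decomp (n := n) S T
  have hT : ind T = ind (S ∩ T) + ind (T \ S) := by
    rw [Finset.inter_comm]; exact ind_decomp T S
  rw [ind_union_decomp S T, hS, hT]
  simp only [Bt_add_left]
  ring

lemma Q_id (S T : Finset (Fin (n + 1))) :
    Q p S + Q p T = Q p (S ∪ T) + Q p (S ∩ T) - 2 * Bt p (ind (S \ T)) (ind (T \ S)) := by
  have hS := ind_decomp (n := n) S T
  have hT : ind T = ind (S ∩ T) + ind (T \ S) := by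
    rw [Finset.inter_comm]; exact ind_decomp T S
  have hU := ind_union_decomp (n := n) S T
  unfold Q
  rw [hU, hS, hT]
  simp only [Bt_add_left, Bt_add_right]
  have c1 : ∀ a b : Fin (n+1) → ℝ, Bt p a b = Bt p b a := Bt_comm p
  rw [c1 (ind (S\T)) (ind (S∩T)), c1 (ind (T\S)) (ind (S∩T)), c1 (ind (T\S)) (ind (S\T))]
  ring

lemma Bt_ind_empty_left (b : Fin (n + 1) → ℝ) : Bt p (ind ∅) b = 0 := by
  rw [ind_empty, Bt_zero_left]

lemma Bt_ind_univ_left (b : Fin (n + 1) → ℝ) : Bt p (ind Finset.univ) b = 0 := by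
  rw [ind_univ, Bt_const_left]

lemma Q_empty : Q p (∅ : Finset (Fin (n + 1))) = 0 := Bt_ind_empty_left p _

lemma Q_univ : Q p (Finset.univ : Finset (Fin (n + 1))) = 0 := Bt_ind_univ_left p _

lemma cross_nonneg (hp : ∀ i j : Fin (n + 1), (i : ℕ) < (j : ℕ) → 0 < p i j)
    (m : Fin (n + 1) → ℝ) (T : Finset (Fin (n + 1)))
    (hm : ∀ i, 0 ≤ m i) (hz : ∀ i, i ∉ T → m i = 0) :
    0 ≤ Bt p m (ind T) := by
  refine Finset.sum_nonneg fun i _ => Finset.sum_nonneg fun j _ => ?_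
  split_ifs with hij
  · have hpij := (hp i j hij).le
    by_cases hiT : i ∈ T <;> by_cases hjT : j ∈ T <;>
      simp only [ind, hiT, hjT, if_true, if_false]
    · nlinarith
    · have := hz j hjT; have := hm i; nlinarith
    · have := hz i hiT; have := hm j; nlinarith
    · nlinarith
  · exact le_refl 0

lemma vor_ind (a : Fin (n + 1) → ℝ)
    (H : ∀ T : Finset (Fin (n + 1)), 2 * Bt p (ind T) a ≤ Q p T)
    (hp : ∀ i j : Fin (n + 1), (i : ℕ) < (j : ℕ) → 0 < p i j) :
    ∀ (N : ℕ) (m : Fin (n + 1) → ℤ), (∀ i, 0 ≤ m i) → (∑ i, m i).toNat ≤ N →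
      2 * Bt p (fun i => (m i : ℝ)) a ≤ Bt p (fun i => (m i : ℝ)) (fun i => (m i : ℝ)) := by
  intro N
  induction N with
  | zero =>
    intro m hm hN
    have hsum0 : ∑ i, m i = 0 := by
      have h0 : 0 ≤ ∑ i, m i := Finset.sum_nonneg fun i _ => hm i
      omega
    have hz : ∀ i, m i = 0 := by
      intro i
      exact (Finset.sum_eq_zero_iff_of_nonneg (fun i _ => hm i)).mp hsum0 i (Finset.mem_univ _)
    have : (fun i => ((m i : ℤ) : ℝ)) = (0 : Fin (n + 1) → ℝ) := by
      funext i; simp [hz i]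
    rw [this, Bt_zero_left, Bt_zero_left]
    norm_num
  | succ N ih =>
    intro m hm hN
    by_cases hz : ∀ i, m i = 0
    · have : (fun i => ((m i : ℤ) : ℝ)) = (0 : Fin (n + 1) → ℝ) := by
        funext i; simp [hz i]
      rw [this, Bt_zero_left, Bt_zero_left]
      norm_num
    · push_neg at hz
      obtain ⟨i₀, hi₀⟩ := hz
      set T : Finset (Fin (n + 1)) := Finset.univ.filter (fun i => 1 ≤ m i) with hT
      have hi₀T : i₀ ∈ T := by
        simp only [hT, Finset.mem_filter, Finset.mem_univ, true_and]
        have := hm i₀; omega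
      set m' : Fin (n + 1) → ℤ := fun i => m i - (if i ∈ T then 1 else 0) with hm'
      have hm'nn : ∀ i, 0 ≤ m' i := by
        intro i
        simp only [hm']
        by_cases hi : i ∈ T
        · simp only [hi, if_true]
          simp only [hT, Finset.mem_filter, Finset.mem_univ, true_and] at hi
          omega
        · simp only [hi, if_false]
          simpa using hm i
      have hdecomp : (fun i => ((m i : ℤ) : ℝ)) = (fun i => ((m' i : ℤ) : ℝ)) + ind T := by
        funext i
        simp only [hm', Pi.add_apply, ind]
        by_cases hi : i ∈ T <;> simp [hi]
      have hsum' : (∑ i, m' i).toNat ≤ N := by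
        have hsT : ∑ i, (if i ∈ T then (1 : ℤ) else 0) = T.card := by
          rw [Finset.sum_ite_mem, Finset.univ_inter, Finset.sum_const]
          simp
        have hEq : ∑ i, m' i = (∑ i, m i) - T.card := by
          simp only [hm']
          rw [Finset.sum_sub_distrib, hsT]
        have hc1 : 1 ≤ T.card := Finset.card_pos.mpr ⟨i₀, hi₀T⟩
        have h1 : 0 ≤ ∑ i, m' i := Finset.sum_nonneg fun i _ => hm'nn i
        have h2 : 0 ≤ ∑ i, m i := Finset.sum_nonneg fun i _ => hm i
        omega
      have ihm' := ih m' hm'nn hsum'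
      have hzT : ∀ i, i ∉ T → ((m' i : ℤ) : ℝ) = 0 := by
        intro i hi
        have : m i ≤ 0 := by
          by_contra hcon
          exact hi (by simp only [hT, Finset.mem_filter, Finset.mem_univ, true_and]; omega)
        have : m i = 0 := le_antisymm this (hm i)
        simp [hm', this, if_neg hi]
      have hcross : 0 ≤ Bt p (fun i => ((m' i : ℤ) : ℝ)) (ind T) :=
        cross_nonneg p hp _ T (fun i => by exact_mod_cast hm'nn i) hzT
      have hHT := H T
      rw [hdecomp]
      rw [Bt_add_left, Bt_add_left, Bt_add_right, Bt_add_right]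
      have hco : Bt p (ind T) (fun i => ((m' i : ℤ) : ℝ)) = Bt p (fun i => ((m' i : ℤ) : ℝ)) (ind T) :=
        Bt_comm p _ _
      unfold Q at hHT
      linarith

lemma voronoi_iff (hp : ∀ i j : Fin (n + 1), (i : ℕ) < (j : ℕ) → 0 < p i j)
    (x : Fin n → ℝ) :
    x ∈ sellingVoronoiCell n p ↔
      ∀ T : Finset (Fin (n + 1)), 2 * Bt p (ind T) (sellingCoord x) ≤ Q p T := by
  constructor
  · intro hx T
    set ℓ : Fin n → ℤ := fun j =>
      (if j.succ ∈ T then (1 : ℤ) else 0) - (if (0 : Fin (n + 1)) ∈ T then 1 else 0) with hℓ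
    have hcast : (fun i => ((ℓ i : ℤ) : ℝ)) = sellingV n T := by
      funext j
      simp only [hℓ, sellingV]
      by_cases h1 : j.succ ∈ T <;> by_cases h2 : (0 : Fin (n + 1)) ∈ T <;> simp [h1, h2]
    have h := hx ℓ
    rw [sellingForm_eq_Bt, sellingForm_eq_Bt] at h
    have hc : sellingCoord (fun i => x i - (ℓ i : ℝ)) =
        sellingCoord x - sellingCoord (sellingV n T) := by
      rw [← hcast, coord_sub]
    rw [hc, Bt_sub_left, Bt_sub_right, Bt_sub_right] at h
    have e1 : Bt p (sellingCoord (sellingV n T)) (sellingCoord x) = Bt p (ind T) (sellingCoord x) :=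
      Bt_sellingV_left p T _
    have e2 : Bt p (sellingCoord x) (sellingCoord (sellingV n T)) = Bt p (ind T) (sellingCoord x) := by
      rw [Bt_comm]; exact Bt_sellingV_left p T _
    have e3 : Bt p (sellingCoord (sellingV n T)) (sellingCoord (sellingV n T)) = Q p T := by
      rw [Bt_sellingV_left, Bt_comm, Bt_sellingV_left, Bt_comm]; rfl
    rw [e1, e2, e3] at h
    linarith
  · intro H ℓ
    set mℓ : Fin (n + 1) → ℤ := Fin.cons 0 ℓ with hmℓ
    have hcoord : sellingCoord (fun i => ((ℓ i : ℤ) : ℝ)) = fun i => ((mℓ i : ℤ) : ℝ) := by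
      funext i
      refine Fin.cases ?_ ?_ i
      · simp [sellingCoord, hmℓ]
      · intro j; simp [sellingCoord, hmℓ]
    obtain ⟨c, hc1⟩ : ∃ c : ℤ, (∀ i, c ≤ mℓ i) := by
      refine ⟨Finset.univ.inf' ⟨0, Finset.mem_univ 0⟩ mℓ, fun i => ?_⟩
      exact Finset.inf'_le _ (Finset.mem_univ i)
    set m : Fin (n + 1) → ℤ := fun i => mℓ i - c with hm
    have hmn : ∀ i, 0 ≤ m i := fun i => by have := hc1 i; simp [hm]; omega
    have hshift : ∀ b : Fin (n + 1) → ℝ, Bt p (fun i => ((m i : ℤ) : ℝ)) b = Bt p (fun i => ((mℓ i : ℤ) : ℝ)) b := by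
      intro b
      have : (fun i => ((m i : ℤ) : ℝ)) = fun i => ((mℓ i : ℤ) : ℝ) - (c : ℝ) := by
        funext i; simp [hm]
      rw [this, Bt_shift_left]
    have key := vor_ind p (sellingCoord x) H hp (∑ i, m i).toNat m hmn (le_refl _)
    have h1 : Bt p (fun i => ((m i : ℤ) : ℝ)) (sellingCoord x) = Bt p (fun i => ((mℓ i : ℤ) : ℝ)) (sellingCoord x) := hshift _
    have h2 : Bt p (fun i => ((m i : ℤ) : ℝ)) (fun i => ((m i : ℤ) : ℝ)) = Bt p (fun i => ((mℓ i : ℤ) : ℝ)) (fun i => ((mℓ i : ℤ) : ℝ)) := by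
      calc Bt p (fun i => ((m i : ℤ) : ℝ)) (fun i => ((m i : ℤ) : ℝ))
          = Bt p (fun i => ((mℓ i : ℤ) : ℝ)) (fun i => ((m i : ℤ) : ℝ)) := hshift _
        _ = Bt p (fun i => ((m i : ℤ) : ℝ)) (fun i => ((mℓ i : ℤ) : ℝ)) := Bt_comm p _ _
        _ = Bt p (fun i => ((mℓ i : ℤ) : ℝ)) (fun i => ((mℓ i : ℤ) : ℝ)) := hshift _
    rw [h1, h2] at key
    show sellingForm n p x x ≤ _
    rw [sellingForm_eq_Bt, sellingForm_eq_Bt]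
    have hcs : sellingCoord (fun i => x i - (ℓ i : ℝ)) =
        sellingCoord x - fun i => ((mℓ i : ℤ) : ℝ) := by
      rw [coord_sub, hcoord]
    rw [hcs, Bt_sub_left, Bt_sub_right, Bt_sub_right]
    have hcomm := Bt_comm p (sellingCoord x) (fun i => ((mℓ i : ℤ) : ℝ))
    linarith

lemma chain_card_le {F : Finset (Finset (Fin (n + 1)))}
    (h1 : ∀ S ∈ F, S.Nonempty ∧ S ≠ Finset.univ)
    (h2 : ∀ S ∈ F, ∀ T ∈ F, S ⊆ T ∨ T ⊆ S) : F.card ≤ n := by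
  have hinj : Set.InjOn Finset.card (F : Set (Finset (Fin (n+1)))) := by
    intro S hS T hT hST
    rcases h2 S hS T hT with h | h
    · exact Finset.eq_of_subset_of_card_le h (le_of_eq hST.symm)
    · exact (Finset.eq_of_subset_of_card_le h (le_of_eq hST)).symm
  have himg : F.image Finset.card ⊆ Finset.Icc 1 n := by
    intro k hk
    obtain ⟨S, hS, rfl⟩ := Finset.mem_image.mp hk
    refine Finset.mem_Icc.mpr ⟨Finset.card_pos.mpr (h1 S hS).1, ?_⟩
    have hlt : S.card < (Finset.univ : Finset (Fin (n + 1))).card :=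
      Finset.card_lt_card (Finset.ssubset_iff_subset_ne.mpr ⟨Finset.subset_univ S, (h1 S hS).2⟩)
    simp only [Finset.card_univ, Fintype.card_fin] at hlt
    omega
  calc F.card = (F.image Finset.card).card := (Finset.card_image_of_injOn hinj).symm
    _ ≤ (Finset.Icc 1 n).card := Finset.card_le_card himg
    _ = n := by rw [Nat.card_Icc]; omega

lemma chain_exists_card {A : Finset (Finset (Fin (n + 1)))} (hA : IsSellingChain n A) :
    ∀ k, 1 ≤ k → k ≤ n → ∃ S ∈ A, S.card = k := by
  obtain ⟨hcard, h1, h2⟩ := hA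
  have hinj : Set.InjOn Finset.card (A : Set (Finset (Fin (n+1)))) := by
    intro S hS T hT hST
    rcases h2 S hS T hT with h | h
    · exact Finset.eq_of_subset_of_card_le h (le_of_eq hST.symm)
    · exact (Finset.eq_of_subset_of_card_le h (le_of_eq hST)).symm
  have himg : A.image Finset.card ⊆ Finset.Icc 1 n := by
    intro k hk
    obtain ⟨S, hS, rfl⟩ := Finset.mem_image.mp hk
    refine Finset.mem_Icc.mpr ⟨Finset.card_pos.mpr (h1 S hS).1, ?_⟩
    have hlt : S.card < (Finset.univ : Finset (Fin (n + 1))).card :=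
      Finset.card_lt_card (Finset.ssubset_iff_subset_ne.mpr ⟨Finset.subset_univ S, (h1 S hS).2⟩)
    simp only [Finset.card_univ, Fintype.card_fin] at hlt
    omega
  have heq : A.image Finset.card = Finset.Icc 1 n := by
    refine Finset.eq_of_subset_of_card_le himg ?_
    rw [Finset.card_image_of_injOn hinj, hcard, Nat.card_Icc]
    omega
  intro k hk1 hk2
  have : k ∈ A.image Finset.card := heq ▸ Finset.mem_Icc.mpr ⟨hk1, hk2⟩
  obtain ⟨S, hS, hSk⟩ := Finset.mem_image.mp this
  exact ⟨S, hS, hSk⟩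

/-- the level function of a chain -/
def hfA (A : Finset (Finset (Fin (n + 1)))) (i : Fin (n + 1)) : ℕ :=
  (A.filter (fun S => i ∉ S)).card + 1

lemma hf_le {A : Finset (Finset (Fin (n + 1)))} (hA : IsSellingChain n A) :
    ∀ S ∈ A, ∀ i ∈ S, hfA A i ≤ S.card := by
  obtain ⟨hcard, h1, h2⟩ := hA
  intro S hS i hi
  have hfsub : (A.filter (fun S' => i ∉ S')).card ≤ S.card - 1 := by
    have := Finset.card_le_card_of_injOn
      (f := Finset.card) (s := A.filter (fun S' => i ∉ S')) (t := Finset.Icc 1 (S.card - 1))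
      ?_ ?_
    · rw [Nat.card_Icc] at this; omega
    · intro S' hS'
      obtain ⟨hS'A, hiS'⟩ := Finset.mem_filter.mp hS'
      have hsub : S' ⊆ S := by
        rcases h2 S' hS'A S hS with h | h
        · exact h
        · exact absurd (h hi) hiS'
      have hne : S' ≠ S := fun hh => hiS' (hh ▸ hi)
      have hlt : S'.card < S.card :=
        Finset.card_lt_card (Finset.ssubset_iff_subset_ne.mpr ⟨hsub, hne⟩)
      exact Finset.mem_Icc.mpr ⟨Finset.card_pos.mpr (h1 S' hS'A).1, by omega⟩
    · intro S1 hS1 S2 hS2 hc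
      have hS1A : S1 ∈ A := by
        have h1x := hS1
        simp only [Finset.coe_filter, Set.mem_setOf_eq] at h1x
        exact h1x.1
      have hS2A : S2 ∈ A := by
        have h2x := hS2
        simp only [Finset.coe_filter, Set.mem_setOf_eq] at h2x
        exact h2x.1
      rcases h2 S1 hS1A S2 hS2A with h | h
      · exact Finset.eq_of_subset_of_card_le h (le_of_eq hc.symm)
      · exact (Finset.eq_of_subset_of_card_le h (le_of_eq hc)).symm
  have hpos : 1 ≤ S.card := Finset.card_pos.mpr (h1 S hS).1
  unfold hfA
  omega

lemma hf_gt {A : Finset (Finset (Fin (n + 1)))} (hA : IsSellingChain n A) :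
    ∀ S ∈ A, ∀ i, i ∉ S → S.card < hfA A i := by
  have h2 := hA.2.2
  intro S hS i hi
  have hsub : Finset.Icc 1 S.card ⊆ (A.filter (fun S' => i ∉ S')).image Finset.card := by
    intro k hk
    obtain ⟨hk1, hk2⟩ := Finset.mem_Icc.mp hk
    have hkn : k ≤ n := le_trans hk2 (by
      have := chain_card_le (n := n) hA.2.1 hA.2.2
      have hAcard := hA.1
      -- S.card ≤ n
      have hlt : S.card < (Finset.univ : Finset (Fin (n + 1))).card :=
        Finset.card_lt_card (Finset.ssubset_iff_subset_ne.mpr ⟨Finset.subset_univ S, (hA.2.1 S hS).2⟩)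
      simp only [Finset.card_univ, Fintype.card_fin] at hlt
      omega)
    obtain ⟨Sk, hSkA, hSkc⟩ := chain_exists_card hA k hk1 hkn
    have hSkS : Sk ⊆ S := by
      rcases h2 Sk hSkA S hS with h | h
      · exact h
      · have : S = Sk := Finset.eq_of_subset_of_card_le h (by omega)
        rw [this]
    refine Finset.mem_image.mpr ⟨Sk, Finset.mem_filter.mpr ⟨hSkA, fun hh => hi (hSkS hh)⟩, hSkc⟩
  have hcount : S.card ≤ (A.filter (fun S' => i ∉ S')).card := by
    calc S.card = (Finset.Icc 1 S.card).card := by rw [Nat.card_Icc]; omega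
      _ ≤ ((A.filter (fun S' => i ∉ S')).image Finset.card).card := Finset.card_le_card hsub
      _ ≤ (A.filter (fun S' => i ∉ S')).card := Finset.card_image_le
  unfold hfA
  omega

lemma mem_eq_filter {A : Finset (Finset (Fin (n + 1)))} (hA : IsSellingChain n A) :
    ∀ S ∈ A, S = Finset.univ.filter (fun i => hfA A i ≤ S.card) := by
  intro S hS
  ext i
  simp only [Finset.mem_filter, Finset.mem_univ, true_and]
  constructor
  · intro hi; exact hf_le hA S hS i hi
  · intro hi
    by_contra hcon
    exact absurd hi (by have := hf_gt hA S hS i hcon; omega)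

/-- the k-th element of the completed chain -/
def SkA (A : Finset (Finset (Fin (n + 1)))) (k : ℕ) : Finset (Fin (n + 1)) :=
  Finset.univ.filter (fun i => hfA A i ≤ k)

lemma Sk_mono {A : Finset (Finset (Fin (n + 1)))} {k l : ℕ} (h : k ≤ l) :
    SkA A k ⊆ SkA A l := by
  intro i hi
  simp only [SkA, Finset.mem_filter, Finset.mem_univ, true_and] at *
  omega

lemma Sk_mem {A : Finset (Finset (Fin (n + 1)))} (hA : IsSellingChain n A)
    {k : ℕ} (hk1 : 1 ≤ k) (hk2 : k ≤ n) : SkA A k ∈ A ∧ (SkA A k).card = k := by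
  obtain ⟨S, hS, hSc⟩ := chain_exists_card hA k hk1 hk2
  have : S = SkA A k := by rw [← hSc]; exact mem_eq_filter hA S hS
  rw [← this]
  exact ⟨hS, hSc⟩

lemma hf_pos (A : Finset (Finset (Fin (n + 1)))) (i : Fin (n + 1)) : 1 ≤ hfA A i := by
  unfold hfA; omega

lemma hf_le_top {A : Finset (Finset (Fin (n + 1)))} (hA : IsSellingChain n A)
    (i : Fin (n + 1)) : hfA A i ≤ n + 1 := by
  have : (A.filter (fun S => i ∉ S)).card ≤ A.card := Finset.card_le_card (Finset.filter_subset _ _)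
  have := hA.1
  unfold hfA
  omega

lemma Sk_zero (A : Finset (Finset (Fin (n + 1)))) : SkA A 0 = ∅ := by
  ext i
  simp only [SkA, Finset.mem_filter, Finset.mem_univ, true_and, Finset.notMem_empty, iff_false]
  have := hf_pos A i
  omega

lemma Sk_top {A : Finset (Finset (Fin (n + 1)))} (hA : IsSellingChain n A) :
    SkA A (n + 1) = Finset.univ := by
  ext i
  simp only [SkA, Finset.mem_filter, Finset.mem_univ, true_and, iff_true]
  exact hf_le_top hA i

lemma Sk_card {A : Finset (Finset (Fin (n + 1)))} (hA : IsSellingChain n A)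
    {k : ℕ} (hk : k ≤ n + 1) : (SkA A k).card = k := by
  rcases Nat.eq_zero_or_pos k with rfl | hk1
  · rw [Sk_zero]; rfl
  · rcases Nat.lt_or_ge k (n + 1) with hlt | hge
    · exact (Sk_mem hA hk1 (by omega)).2
    · have : k = n + 1 := by omega
      subst this
      rw [Sk_top hA, Finset.card_univ, Fintype.card_fin]

lemma fiber_card {A : Finset (Finset (Fin (n + 1)))} (hA : IsSellingChain n A)
    {k : ℕ} (hk1 : 1 ≤ k) (hk2 : k ≤ n + 1) :
    (SkA A k \ SkA A (k - 1)).card = 1 := by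
  rw [Finset.card_sdiff_of_subset (Sk_mono (by omega)), Sk_card hA hk2, Sk_card hA (by omega)]
  omega

lemma hf_inj {A : Finset (Finset (Fin (n + 1)))} (hA : IsSellingChain n A) :
    Function.Injective (hfA A) := by
  intro i j hij
  set k := hfA A i with hk
  have hk1 := hf_pos A i
  have hk2 := hf_le_top hA i
  have hi : i ∈ SkA A k \ SkA A (k - 1) := by
    simp only [SkA, Finset.mem_sdiff, Finset.mem_filter, Finset.mem_univ, true_and]
    omega
  have hj : j ∈ SkA A k \ SkA A (k - 1) := by
    simp only [SkA, Finset.mem_sdiff, Finset.mem_filter, Finset.mem_univ, true_and]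
    omega
  exact Finset.card_le_one.mp (le_of_eq (fiber_card hA hk1 hk2)) i hi j hj

lemma sum_Sk {A : Finset (Finset (Fin (n + 1)))} (hA : IsSellingChain n A) :
    ∀ k, k ≤ n + 1 → 2 * ∑ i ∈ SkA A k, hfA A i = k * (k + 1) := by
  intro k
  induction k with
  | zero => intro _; rw [Sk_zero]; simp
  | succ k ih =>
    intro hk
    have hsd := Finset.sum_sdiff (f := hfA A) (Sk_mono (A := A) (Nat.le_succ k))
    have hfib : ∑ i ∈ SkA A (k + 1) \ SkA A k, hfA A i = k + 1 := by
      have hconst : ∀ i ∈ SkA A (k + 1) \ SkA A k, hfA A i = k + 1 := by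
        intro i hi
        simp only [SkA, Finset.mem_sdiff, Finset.mem_filter, Finset.mem_univ, true_and] at hi
        omega
      rw [Finset.sum_congr rfl hconst, Finset.sum_const, smul_eq_mul]
      have : (SkA A (k + 1) \ SkA A k).card = 1 := by
        have := fiber_card hA (k := k + 1) (by omega) hk
        simpa using this
      rw [this]; ring
    have ihk := ih (by omega)
    have : ∑ i ∈ SkA A (k + 1), hfA A i = (k + 1) + ∑ i ∈ SkA A k, hfA A i := by
      rw [← hsd, hfib]
    rw [this]
    have h2 : (k + 1) * (k + 1 + 1) = k * (k + 1) + 2 * (k + 1) := by ring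
    omega

lemma sum_distinct_pos : ∀ (F : Finset ℕ), (∀ x ∈ F, 1 ≤ x) →
    F.card * (F.card + 1) ≤ 2 * ∑ x ∈ F, x := by
  intro F
  induction F using Finset.strongInduction with
  | _ F ih =>
    intro hF
    rcases Finset.eq_empty_or_nonempty F with rfl | hne
    · simp
    · set M := F.max' hne with hM
      have hMF : M ∈ F := F.max'_mem hne
      have hcard_le : F.card ≤ M := by
        have hsub : F ⊆ Finset.Icc 1 M := by
          intro x hx
          exact Finset.mem_Icc.mpr ⟨hF x hx, Finset.le_max' F x hx⟩
        have := Finset.card_le_card hsub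
        rw [Nat.card_Icc] at this
        omega
      have hers : F.erase M ⊂ F := Finset.erase_ssubset hMF
      have ihe := ih (F.erase M) hers (fun x hx => hF x (Finset.mem_of_mem_erase hx))
      have hsum : ∑ x ∈ F, x = M + ∑ x ∈ F.erase M, x := (Finset.add_sum_erase F id hMF).symm
      have hcarde : (F.erase M).card = F.card - 1 := Finset.card_erase_of_mem hMF
      have hc1 : 1 ≤ F.card := Finset.card_pos.mpr hne
      rw [hcarde] at ihe
      obtain ⟨d, hd⟩ : ∃ d, F.card = d + 1 := ⟨F.card - 1, by omega⟩
      have hd1 : F.card - 1 = d := by omega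
      rw [hd1] at ihe
      have hdM : d + 1 ≤ M := by omega
      calc F.card * (F.card + 1) = (d + 1) * (d + 2) := by rw [hd]
        _ = d * (d + 1) + 2 * (d + 1) := by ring
        _ ≤ 2 * (∑ x ∈ F.erase M, x) + 2 * M := by
            have h5 : 2 * (d + 1) ≤ 2 * M := by omega
            have h6 : d * (d + 1) ≤ 2 * ∑ x ∈ F.erase M, x := ihe
            omega
        _ = 2 * ∑ x ∈ F, x := by rw [hsum]; ring

lemma phi_lower {A : Finset (Finset (Fin (n + 1)))} (hA : IsSellingChain n A)
    (T : Finset (Fin (n + 1))) :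
    T.card * (T.card + 1) ≤ 2 * ∑ i ∈ T, hfA A i := by
  have hinj : Set.InjOn (hfA A) (T : Set (Fin (n + 1))) := fun i _ j _ h => hf_inj hA h
  have himg := sum_distinct_pos (T.image (hfA A)) (fun x hx => by
    obtain ⟨i, _, rfl⟩ := Finset.mem_image.mp hx
    exact hf_pos A i)
  rw [Finset.card_image_of_injOn hinj, Finset.sum_image (fun i hi j hj h => hinj hi hj h)] at himg
  exact himg

lemma chain_feasible {A : Finset (Finset (Fin (n + 1)))} (hA : IsSellingChain n A)
    (hp : ∀ i j : Fin (n + 1), (i : ℕ) < (j : ℕ) → 0 < p i j)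
    (a : Fin (n + 1) → ℝ)
    (hx : ∀ S ∈ A, 2 * Bt p (ind S) a = Q p S) :
    ∀ T : Finset (Fin (n + 1)), 2 * Bt p (ind T) a ≤ Q p T := by
  have geq : ∀ k, k ≤ n + 1 → 2 * Bt p (ind (SkA A k)) a = Q p (SkA A k) := by
    intro k hk
    rcases Nat.eq_zero_or_pos k with rfl | hk1
    · rw [Sk_zero, Bt_ind_empty_left, Q_empty]; ring
    · rcases Nat.lt_or_ge k (n + 1) with hlt | hge
      · exact hx _ (Sk_mem hA hk1 (by omega)).1
      · have : k = n + 1 := by omega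
        subst this
        rw [Sk_top hA, Bt_ind_univ_left, Q_univ]; ring
  -- integer potential
  set φ : Finset (Fin (n + 1)) → ℤ :=
    fun T => 2 * (∑ i ∈ T, (hfA A i : ℤ)) - (T.card : ℤ) * ((T.card : ℤ) + 1) with hφ
  have hφ_nonneg : ∀ T, 0 ≤ φ T := by
    intro T
    have := phi_lower hA T
    have hcast : ((T.card * (T.card + 1) : ℕ) : ℤ) ≤ ((2 * ∑ i ∈ T, hfA A i : ℕ) : ℤ) := by
      exact_mod_cast this
    push_cast at hcast
    simp only [hφ]
    linarith
  have key : ∀ N : ℕ, ∀ T : Finset (Fin (n + 1)), (φ T).toNat = N →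
      2 * Bt p (ind T) a ≤ Q p T := by
    intro N
    induction N using Nat.strong_induction_on with
    | _ N ih =>
      intro T hTN
      set k := T.card with hk
      have hkle : k ≤ n + 1 := by
        have := Finset.card_le_univ T
        simpa [Finset.card_univ, Fintype.card_fin] using this
      set S := SkA A k with hS
      by_cases hTS : T = S
      · rw [hTS]
        exact le_of_eq (geq k hkle)
      · -- recursive step
        have hScard : S.card = k := Sk_card hA hkle
        have hd1 : 1 ≤ (T \ S).card := by
          by_contra hcon
          have h0 : (T \ S).card = 0 := by omega
          have hsub : T ⊆ S := by
            intro i hi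
            by_contra hiS
            have : i ∈ T \ S := Finset.mem_sdiff.mpr ⟨hi, hiS⟩
            have := Finset.card_pos.mpr ⟨i, this⟩
            omega
          exact hTS (Finset.eq_of_subset_of_card_le hsub (by omega))
        set d := (T \ S).card with hdd
        have hci : (T ∩ S).card + (T \ S).card = T.card := Finset.card_inter_add_card_sdiff T S
        have hcu : (T ∪ S).card + (T ∩ S).card = T.card + S.card := Finset.card_union_add_card_inter T S
        have hsums : (∑ i ∈ T ∪ S, (hfA A i : ℤ)) + (∑ i ∈ T ∩ S, (hfA A i : ℤ)) =
            (∑ i ∈ T, (hfA A i : ℤ)) + (∑ i ∈ S, (hfA A i : ℤ)) := Finset.sum_union_inter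
        have hss : 2 * (∑ i ∈ S, (hfA A i : ℤ)) = (k : ℤ) * ((k : ℤ) + 1) := by
          have := sum_Sk hA k hkle
          exact_mod_cast this
        have hcuz : ((T ∪ S).card : ℤ) = (k : ℤ) + (d : ℤ) := by
          have : (T ∪ S).card + (T ∩ S).card = k + k := by omega
          omega
        have hciz : ((T ∩ S).card : ℤ) = (k : ℤ) - (d : ℤ) := by omega
        have hkey : φ (T ∪ S) + φ (T ∩ S) = φ T - 2 * (d : ℤ) ^ 2 := by
          simp only [hφ]
          rw [hcuz, hciz]
          have hkk : (T.card : ℤ) = (k : ℤ) := by rw [hk]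
          rw [hkk]
          linear_combination 2 * hsums + hss
        have hd2 : (1 : ℤ) ≤ (d : ℤ) ^ 2 := by
          have hd1' : (1 : ℤ) ≤ (d : ℤ) := by exact_mod_cast hd1
          nlinarith
        have hU0 := hφ_nonneg (T ∪ S)
        have hI0 := hφ_nonneg (T ∩ S)
        have hT0 := hφ_nonneg T
        have hUlt : (φ (T ∪ S)).toNat < N := by omega
        have hIlt : (φ (T ∩ S)).toNat < N := by omega
        have hu := ih _ hUlt (T ∪ S) rfl
        have hi := ih _ hIlt (T ∩ S) rfl
        have hq := Q_id p T S
        have hl := lin_modular p T S a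
        have hcross : Bt p (ind (T \ S)) (ind (S \ T)) ≤ 0 :=
          Bt_disjoint_nonpos p hp (disjoint_sdiff_sdiff)
        have hSeq := geq k hkle
        rw [← hS] at hSeq
        linarith
  intro T
  exact key (φ T).toNat T rfl

lemma chain_ker {A : Finset (Finset (Fin (n + 1)))} (hA : IsSellingChain n A)
    (hp : ∀ i j : Fin (n + 1), (i : ℕ) < (j : ℕ) → 0 < p i j)
    (w : Fin n → ℝ)
    (hw : ∀ S ∈ A, Bt p (ind S) (sellingCoord w) = 0) : w = 0 := by
  set a := sellingCoord w with ha
  have hk : ∀ k, k ≤ n + 1 → Bt p (ind (SkA A k)) a = 0 := by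
    intro k hkle
    rcases Nat.eq_zero_or_pos k with rfl | hk1
    · rw [Sk_zero, Bt_ind_empty_left]
    · rcases Nat.lt_or_ge k (n + 1) with hlt | hge
      · exact hw _ (Sk_mem hA hk1 (by omega)).1
      · have : k = n + 1 := by omega
        subst this
        rw [Sk_top hA, Bt_ind_univ_left]
  have hsing : ∀ i : Fin (n + 1), Bt p (ind {i}) a = 0 := by
    intro i
    set k := hfA A i with hkdef
    have hk1 : 1 ≤ k := hf_pos A i
    have hk2 : k ≤ n + 1 := hf_le_top hA i
    have hfib : SkA A k \ SkA A (k - 1) = {i} := by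
      obtain ⟨b, hb⟩ := Finset.card_eq_one.mp (fiber_card hA hk1 hk2)
      have hib : i ∈ SkA A k \ SkA A (k - 1) := by
        simp only [SkA, Finset.mem_sdiff, Finset.mem_filter, Finset.mem_univ, true_and]
        omega
      rw [hb] at hib ⊢
      rw [Finset.mem_singleton.mp hib]
    have hindd : ind ({i} : Finset (Fin (n + 1))) = ind (SkA A k) - ind (SkA A (k - 1)) := by
      rw [← hfib]
      exact ind_sdiff_of_subset (Sk_mono (by omega))
    rw [hindd, Bt_sub_left, hk k hk2, hk (k - 1) (by omega)]
    ring
  have hdecomp : a = ∑ i : Fin (n + 1), a i • ind {i} := by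
    funext j
    rw [Finset.sum_apply]
    simp only [Pi.smul_apply]
    have : ∀ i : Fin (n + 1), a i • ind {i} j = if j = i then a i else 0 := by
      intro i
      simp only [Pi.smul_apply, ind, Finset.mem_singleton, smul_eq_mul, mul_ite, mul_one, mul_zero]
    rw [Finset.sum_congr rfl fun i _ => this i]
    rw [Finset.sum_ite_eq]
    simp
  have h1 : Bt p (∑ i : Fin (n + 1), a i • ind {i}) a = 0 := by
    rw [Bt_sum_left]
    refine Finset.sum_eq_zero fun i _ => ?_
    rw [Bt_smul_left, hsing i]
    ring
  have hBzero : Bt p a a = 0 := by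
    calc Bt p a a = Bt p (∑ i : Fin (n + 1), a i • ind {i}) a := by rw [← hdecomp]
      _ = 0 := h1
  exact Bt_coord_eq_zero p hp hBzero

/-- The evaluation linear map for a finite family of constraint sets. -/
noncomputable def phiA (F : Finset (Finset (Fin (n + 1)))) :
    (Fin n → ℝ) →ₗ[ℝ] (↥F → ℝ) where
  toFun y := fun S => Bt p (ind S.1) (sellingCoord y)
  map_add' y z := by
    funext S
    simp only [Pi.add_apply]
    rw [coord_add, Bt_add_right]
  map_smul' c y := by
    funext S
    simp only [Pi.smul_apply, RingHom.id_apply, smul_eq_mul]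
    rw [coord_smul, Bt_smul_right]

lemma phiA_inj {A : Finset (Finset (Fin (n + 1)))} (hA : IsSellingChain n A)
    (hp : ∀ i j : Fin (n + 1), (i : ℕ) < (j : ℕ) → 0 < p i j) :
    Function.Injective (phiA p A) := by
  rw [← LinearMap.ker_eq_bot]
  rw [LinearMap.ker_eq_bot']
  intro y hy
  refine chain_ker p hA hp y fun S hS => ?_
  exact congrFun hy ⟨S, hS⟩

lemma chain_exists_sol {A : Finset (Finset (Fin (n + 1)))} (hA : IsSellingChain n A)
    (hp : ∀ i j : Fin (n + 1), (i : ℕ) < (j : ℕ) → 0 < p i j) :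
    ∃ y : Fin n → ℝ, ∀ S ∈ A, 2 * Bt p (ind S) (sellingCoord y) = Q p S := by
  have hfr : Module.finrank ℝ (Fin n → ℝ) = Module.finrank ℝ (↥A → ℝ) := by
    rw [Module.finrank_fintype_fun_eq_card, Module.finrank_fintype_fun_eq_card,
      Fintype.card_fin, Fintype.card_coe, hA.1]
  have hsurj : Function.Surjective (phiA p A) :=
    (LinearMap.injective_iff_surjective_of_finrank_eq_finrank hfr).mp (phiA_inj p hA hp)
  obtain ⟨y, hy⟩ := hsurj (fun S => Q p S.1 / 2)
  refine ⟨y, fun S hS => ?_⟩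
  have := congrFun hy ⟨S, hS⟩
  simp only [phiA, LinearMap.coe_mk, AddHom.coe_mk] at this
  rw [this]
  ring

lemma chain_unique_sol {A : Finset (Finset (Fin (n + 1)))} (hA : IsSellingChain n A)
    (hp : ∀ i j : Fin (n + 1), (i : ℕ) < (j : ℕ) → 0 < p i j)
    {y z : Fin n → ℝ}
    (hy : ∀ S ∈ A, 2 * Bt p (ind S) (sellingCoord y) = Q p S)
    (hz : ∀ S ∈ A, 2 * Bt p (ind S) (sellingCoord z) = Q p S) : y = z := by
  have h0 : y - z = 0 := by
    refine chain_ker p hA hp (y - z) fun S hS => ?_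
    have hc : sellingCoord (y - z) = sellingCoord y - sellingCoord z := by
      have := coord_sub (n := n) y z
      convert this using 2
      rfl
    rw [hc, Bt_sub_right]
    have h1 := hy S hS
    have h2 := hz S hS
    linarith
  have := sub_eq_zero.mp h0
  exact this

lemma active_total (hp : ∀ i j : Fin (n + 1), (i : ℕ) < (j : ℕ) → 0 < p i j)
    (a : Fin (n + 1) → ℝ) (hall : ∀ T, 2 * Bt p (ind T) a ≤ Q p T)
    {S T : Finset (Fin (n + 1))}
    (hS : 2 * Bt p (ind S) a = Q p S) (hT : 2 * Bt p (ind T) a = Q p T) :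
    S ⊆ T ∨ T ⊆ S := by
  by_contra hcon
  push_neg at hcon
  obtain ⟨h1, h2⟩ := hcon
  have hu : (S \ T).Nonempty := by
    obtain ⟨i, hi, hni⟩ := Finset.not_subset.mp h1
    exact ⟨i, Finset.mem_sdiff.mpr ⟨hi, hni⟩⟩
  have hw : (T \ S).Nonempty := by
    obtain ⟨i, hi, hni⟩ := Finset.not_subset.mp h2
    exact ⟨i, Finset.mem_sdiff.mpr ⟨hi, hni⟩⟩
  have hneg := Bt_disjoint_neg p hp disjoint_sdiff_sdiff hu hw
  have hq := Q_id p S T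
  have hl := lin_modular p S T a
  have h3 := hall (S ∪ T)
  have h4 := hall (S ∩ T)
  linarith

/-- the active constraint family of a point -/
noncomputable def Act (a : Fin (n + 1) → ℝ) : Finset (Finset (Fin (n + 1))) :=
  @Finset.filter _
    (fun T => T.Nonempty ∧ T ≠ Finset.univ ∧ 2 * Bt p (ind T) a = Q p T)
    (Classical.decPred _) Finset.univ

lemma mem_Act {a : Fin (n + 1) → ℝ} {T : Finset (Fin (n + 1))} :
    T ∈ Act p a ↔ T.Nonempty ∧ T ≠ Finset.univ ∧ 2 * Bt p (ind T) a = Q p T := by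
  unfold Act
  rw [@Finset.mem_filter _ _ (Classical.decPred _) Finset.univ T]
  simp

lemma Act_chain_prop (hp : ∀ i j : Fin (n + 1), (i : ℕ) < (j : ℕ) → 0 < p i j)
    (a : Fin (n + 1) → ℝ) (hall : ∀ T, 2 * Bt p (ind T) a ≤ Q p T) :
    (∀ S ∈ Act p a, S.Nonempty ∧ S ≠ Finset.univ) ∧
      (∀ S ∈ Act p a, ∀ T ∈ Act p a, S ⊆ T ∨ T ⊆ S) := by
  constructor
  · intro S hS
    have := (mem_Act p).mp hS
    exact ⟨this.1, this.2.1⟩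
  · intro S hS T hT
    exact active_total p hp a hall ((mem_Act p).mp hS).2.2 ((mem_Act p).mp hT).2.2

lemma extreme_ker (hp : ∀ i j : Fin (n + 1), (i : ℕ) < (j : ℕ) → 0 < p i j)
    {x : Fin n → ℝ} (hxe : x ∈ Set.extremePoints ℝ (sellingVoronoiCell n p))
    (w : Fin n → ℝ)
    (hw : ∀ T ∈ Act p (sellingCoord x), Bt p (ind T) (sellingCoord w) = 0) :
    w = 0 := by
  classical
  obtain ⟨hxV, hext⟩ := hxe
  have hall : ∀ T, 2 * Bt p (ind T) (sellingCoord x) ≤ Q p T := (voronoi_iff p hp x).mp hxV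
  by_contra hw0
  set Wt : Finset (Fin (n + 1)) → ℝ := fun T => Bt p (ind T) (sellingCoord w) with hWt
  have hstrict : ∀ T, Wt T ≠ 0 → 2 * Bt p (ind T) (sellingCoord x) < Q p T := by
    intro T hT
    have hTne : T.Nonempty := by
      rcases Finset.eq_empty_or_nonempty T with rfl | h
      · exact absurd (Bt_ind_empty_left p _) hT
      · exact h
    have hTnu : T ≠ Finset.univ := by
      intro hh
      exact hT (by rw [hWt]; simp only; rw [hh, Bt_ind_univ_left])
    have hTnA : T ∉ Act p (sellingCoord x) := fun hmem => hT (hw T hmem)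
    have : ¬(2 * Bt p (ind T) (sellingCoord x) = Q p T) := by
      intro heq
      exact hTnA ((mem_Act p).mpr ⟨hTne, hTnu, heq⟩)
    exact lt_of_le_of_ne (hall T) this
  -- choose ε
  set g : Finset (Fin (n + 1)) → ℝ := fun T =>
    if Wt T = 0 then 1 else (Q p T - 2 * Bt p (ind T) (sellingCoord x)) / (2 * |Wt T|) with hg
  have hgpos : ∀ T, 0 < g T := by
    intro T
    rw [hg]
    simp only
    split_ifs with h
    · norm_num
    · exact div_pos (by linarith [hstrict T h]) (by positivity)
  set ε : ℝ := Finset.univ.inf' Finset.univ_nonempty g with hε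
  have hεpos : 0 < ε := by
    rw [hε]
    rw [Finset.lt_inf'_iff]
    intro T _
    exact hgpos T
  have hεle : ∀ T, ε ≤ g T := fun T => Finset.inf'_le g (Finset.mem_univ T)
  have hbound : ∀ T, ε * |Wt T| * 2 ≤ Q p T - 2 * Bt p (ind T) (sellingCoord x) := by
    intro T
    by_cases h : Wt T = 0
    · rw [h]
      simp only [abs_zero, mul_zero, zero_mul]
      linarith [hall T]
    · have h1 : ε ≤ (Q p T - 2 * Bt p (ind T) (sellingCoord x)) / (2 * |Wt T|) := by
        have := hεle T
        rw [hg] at this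
        simpa [h] using this
      have h2 : 0 < 2 * |Wt T| := by positivity
      calc ε * |Wt T| * 2 = ε * (2 * |Wt T|) := by ring
        _ ≤ ((Q p T - 2 * Bt p (ind T) (sellingCoord x)) / (2 * |Wt T|)) * (2 * |Wt T|) :=
            mul_le_mul_of_nonneg_right h1 h2.le
        _ = Q p T - 2 * Bt p (ind T) (sellingCoord x) := div_mul_cancel₀ _ (ne_of_gt h2)
  -- the two perturbed points
  have hmem : ∀ c : ℝ, |c| ≤ ε → x + c • w ∈ sellingVoronoiCell n p := by
    intro c hc
    rw [voronoi_iff p hp]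
    intro T
    have hcoord : sellingCoord (x + c • w) = sellingCoord x + c • sellingCoord w := by
      rw [coord_add, coord_smul]
    rw [hcoord, Bt_add_right, Bt_smul_right]
    have habs : |c * Wt T| ≤ ε * |Wt T| := by
      rw [abs_mul]
      exact mul_le_mul_of_nonneg_right hc (abs_nonneg _)
    have h2 : 2 * (c * Wt T) ≤ Q p T - 2 * Bt p (ind T) (sellingCoord x) := by
      have := le_abs_self (c * Wt T)
      have hb := hbound T
      nlinarith [abs_nonneg (Wt T)]
    have : Bt p (ind T) (c • sellingCoord w) = c * Wt T := by
      rw [Bt_smul_right]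
    linarith [h2]
  have hy1 : x + (-ε) • w ∈ sellingVoronoiCell n p := hmem (-ε) (by rw [abs_neg, abs_of_pos hεpos])
  have hy2 : x + ε • w ∈ sellingVoronoiCell n p := hmem ε (by rw [abs_of_pos hεpos])
  have hseg : x ∈ openSegment ℝ (x + (-ε) • w) (x + ε • w) := by
    refine ⟨1/2, 1/2, by norm_num, by norm_num, by norm_num, ?_⟩
    funext i
    simp only [Pi.add_apply, Pi.smul_apply, smul_eq_mul, Pi.neg_apply]
    ring
  have hres := hext hy1 hy2 hseg
  have h1 : x + (-ε) • w = x := hres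
  have h2 : (-ε) • w = 0 := by
    have := congrArg (fun z => z - x) h1
    simpa [add_sub_cancel_left] using this
  have := smul_eq_zero.mp h2
  rcases this with h | h
  · exact absurd h (by simp; exact ne_of_gt hεpos)
  · exact hw0 h

lemma extreme_act_chain (hp : ∀ i j : Fin (n + 1), (i : ℕ) < (j : ℕ) → 0 < p i j)
    {x : Fin n → ℝ} (hxe : x ∈ Set.extremePoints ℝ (sellingVoronoiCell n p)) :
    IsSellingChain n (Act p (sellingCoord x)) := by
  have hall : ∀ T, 2 * Bt p (ind T) (sellingCoord x) ≤ Q p T :=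
    (voronoi_iff p hp x).mp hxe.1
  obtain ⟨hprop, htot⟩ := Act_chain_prop p hp (sellingCoord x) hall
  have hle : (Act p (sellingCoord x)).card ≤ n := chain_card_le hprop htot
  have hinj : Function.Injective (phiA p (Act p (sellingCoord x))) := by
    rw [← LinearMap.ker_eq_bot, LinearMap.ker_eq_bot']
    intro y hy
    refine extreme_ker p hp hxe y fun T hT => ?_
    exact congrFun hy ⟨T, hT⟩
  have hge : n ≤ (Act p (sellingCoord x)).card := by
    have := LinearMap.finrank_le_finrank_of_injective hinj
    rwa [Module.finrank_fintype_fun_eq_card, Module.finrank_fintype_fun_eq_card,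
      Fintype.card_fin, Fintype.card_coe] at this
  exact ⟨le_antisymm hle hge, hprop, htot⟩

end S19

/-- Part 1 of Proposition B.10: (a) for every chain `A` there is a unique point `s_A`
with `2⟨v_S, s_A⟩_p = ⟨v_S, v_S⟩_p` for all `S ∈ A`; (b) `s_A` lies in the Voronoi cell;
(c) `A ↦ s_A` is a bijection from the chains onto the extreme points (vertices) of the
Voronoi cell. -/
theorem statement19 (n : ℕ) (hn : 1 ≤ n) (p : Fin (n + 1) → Fin (n + 1) → ℝ)
    (hp : ∀ i j : Fin (n + 1), (i : ℕ) < (j : ℕ) → 0 < p i j) :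
    ∃ s : {A : Finset (Finset (Fin (n + 1))) // IsSellingChain n A} → (Fin n → ℝ),
      (∀ A, ∀ S ∈ A.1,
        2 * sellingForm n p (sellingV n S) (s A) =
          sellingForm n p (sellingV n S) (sellingV n S)) ∧
      (∀ A, ∀ y : Fin n → ℝ,
        (∀ S ∈ A.1,
          2 * sellingForm n p (sellingV n S) y =
            sellingForm n p (sellingV n S) (sellingV n S)) → y = s A) ∧
      (∀ A, s A ∈ sellingVoronoiCell n p) ∧
      Function.Injective s ∧
      Set.range s = Set.extremePoints ℝ (sellingVoronoiCell n p) := by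
  classical
  have conv : ∀ (A : Finset (Finset (Fin (n + 1)))) (y : Fin n → ℝ),
      (∀ S ∈ A, 2 * sellingForm n p (sellingV n S) y =
        sellingForm n p (sellingV n S) (sellingV n S)) ↔
      (∀ S ∈ A, 2 * S19.Bt p (S19.ind S) (sellingCoord y) = S19.Q p S) := by
    intro A y
    constructor <;> intro h S hS
    · rw [← S19.sf_v, ← S19.sf_vv]
      exact h S hS
    · rw [S19.sf_v, S19.sf_vv]
      exact h S hS
  have exsol : ∀ A : {A : Finset (Finset (Fin (n + 1))) // IsSellingChain n A},
      ∃ y : Fin n → ℝ, ∀ S ∈ A.1, 2 * sellingForm n p (sellingV n S) y =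
        sellingForm n p (sellingV n S) (sellingV n S) := by
    intro A
    obtain ⟨y, hy⟩ := S19.chain_exists_sol p A.2 hp
    exact ⟨y, (conv A.1 y).mpr hy⟩
  choose s hs using exsol
  have huniq : ∀ (A : {A : Finset (Finset (Fin (n + 1))) // IsSellingChain n A})
      (y : Fin n → ℝ), (∀ S ∈ A.1, 2 * sellingForm n p (sellingV n S) y =
        sellingForm n p (sellingV n S) (sellingV n S)) → y = s A := by
    intro A y hy
    exact S19.chain_unique_sol p A.2 hp ((conv _ _).mp hy) ((conv _ _).mp (hs A))
  have hfeas : ∀ A, s A ∈ sellingVoronoiCell n p := by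
    intro A
    rw [S19.voronoi_iff p hp]
    exact S19.chain_feasible p A.2 hp _ ((conv _ _).mp (hs A))
  have hsub : ∀ A : {A : Finset (Finset (Fin (n + 1))) // IsSellingChain n A},
      A.1 ⊆ S19.Act p (sellingCoord (s A)) := by
    intro A S hS
    exact (S19.mem_Act p).mpr ⟨(A.2.2.1 S hS).1, (A.2.2.1 S hS).2,
      ((conv _ _).mp (hs A)) S hS⟩
  have hActcard : ∀ A : {A : Finset (Finset (Fin (n + 1))) // IsSellingChain n A},
      (S19.Act p (sellingCoord (s A))).card ≤ n := by
    intro A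
    have hall := (S19.voronoi_iff p hp (s A)).mp (hfeas A)
    obtain ⟨hprop, htot⟩ := S19.Act_chain_prop p hp _ hall
    exact S19.chain_card_le hprop htot
  have hActeq : ∀ A : {A : Finset (Finset (Fin (n + 1))) // IsSellingChain n A},
      A.1 = S19.Act p (sellingCoord (s A)) := by
    intro A
    refine Finset.eq_of_subset_of_card_le (hsub A) ?_
    calc (S19.Act p (sellingCoord (s A))).card ≤ n := hActcard A
      _ = A.1.card := A.2.1.symm
  have hinj : Function.Injective s := by
    intro A B hAB
    have h1 := hActeq A
    have h2 := hActeq B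
    rw [hAB] at h1
    apply Subtype.ext
    rw [h1, h2]
  refine ⟨s, hs, huniq, hfeas, hinj, ?_⟩
  ext x
  constructor
  · rintro ⟨A, rfl⟩
    refine ⟨hfeas A, ?_⟩
    intro x₁ h₁ x₂ h₂ hseg
    obtain ⟨c1, c2, hc1, hc2, hc12, hsum⟩ := hseg
    have e₁ := (S19.voronoi_iff p hp x₁).mp h₁
    have e₂ := (S19.voronoi_iff p hp x₂).mp h₂
    have hsA := (conv _ _).mp (hs A)
    have esum : ∀ S ∈ A.1,
        c1 * (2 * S19.Bt p (S19.ind S) (sellingCoord x₁)) +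
        c2 * (2 * S19.Bt p (S19.ind S) (sellingCoord x₂)) = S19.Q p S := by
      intro S hS
      have hc : sellingCoord (s A) =
          c1 • sellingCoord x₁ + c2 • sellingCoord x₂ := by
        rw [← hsum, S19.coord_add, S19.coord_smul, S19.coord_smul]
      have := hsA S hS
      rw [hc, S19.Bt_add_right, S19.Bt_smul_right, S19.Bt_smul_right] at this
      linarith
    have heq1 : ∀ S ∈ A.1, 2 * S19.Bt p (S19.ind S) (sellingCoord x₁) = S19.Q p S := by
      intro S hS
      have h1' := e₁ S
      have h2' := e₂ S
      have hsS := esum S hS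
      have hm1 : c1 * (2 * S19.Bt p (S19.ind S) (sellingCoord x₁)) ≤ c1 * S19.Q p S :=
        mul_le_mul_of_nonneg_left h1' hc1.le
      have hm2 : c2 * (2 * S19.Bt p (S19.ind S) (sellingCoord x₂)) ≤ c2 * S19.Q p S :=
        mul_le_mul_of_nonneg_left h2' hc2.le
      have hQ : c1 * S19.Q p S + c2 * S19.Q p S = S19.Q p S := by
        have : (c1 + c2) * S19.Q p S = S19.Q p S := by rw [hc12]; ring
        linarith [this]
      have he : c1 * (2 * S19.Bt p (S19.ind S) (sellingCoord x₁)) = c1 * S19.Q p S := by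
        linarith
      exact mul_left_cancel₀ (ne_of_gt hc1) he
    have heq2 : ∀ S ∈ A.1, 2 * S19.Bt p (S19.ind S) (sellingCoord x₂) = S19.Q p S := by
      intro S hS
      have h1' := e₁ S
      have h2' := e₂ S
      have hsS := esum S hS
      have hm1 : c1 * (2 * S19.Bt p (S19.ind S) (sellingCoord x₁)) ≤ c1 * S19.Q p S :=
        mul_le_mul_of_nonneg_left h1' hc1.le
      have hm2 : c2 * (2 * S19.Bt p (S19.ind S) (sellingCoord x₂)) ≤ c2 * S19.Q p S :=
        mul_le_mul_of_nonneg_left h2' hc2.le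
      have hQ : c1 * S19.Q p S + c2 * S19.Q p S = S19.Q p S := by
        have : (c1 + c2) * S19.Q p S = S19.Q p S := by rw [hc12]; ring
        linarith [this]
      have he : c2 * (2 * S19.Bt p (S19.ind S) (sellingCoord x₂)) = c2 * S19.Q p S := by
        linarith
      exact mul_left_cancel₀ (ne_of_gt hc2) he
    exact huniq A x₁ ((conv _ _).mpr heq1)
  · intro hx
    have hchain := S19.extreme_act_chain p hp hx
    have heq : ∀ S ∈ S19.Act p (sellingCoord x),
        2 * S19.Bt p (S19.ind S) (sellingCoord x) = S19.Q p S :=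
      fun S hS => ((S19.mem_Act p).mp hS).2.2
    have := huniq ⟨_, hchain⟩ x ((conv _ _).mpr heq)
    exact ⟨⟨_, hchain⟩, this.symm⟩
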